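/- For any biconed graph G^{A,B}, the collection of 2-edge-rooted forests of G^{A,B}_red is a multicomplex on the edge set of G^{A,B}_red: if (F, m) is a 2-edge-rooted forest and one copy of one edge is removed from the multiset (F, m), the resulting multiset is again a 2-edge-rooted forest. -/

import Mathlib

/-!
Formalization scaffold for "h-vectors of graphic matroids of biconed graphs".

A graph `G` (loops and parallel edges allowed) with vertex set `A ∪ B` is
modelled by an abstract finite edge type `E` with an endpoint map
`ends : E → Sym2 (Fin m ⊕ₗ Fin n)`, where `A = Fin m = {1,…,m}`,
`Ā = B \ A = Fin n = {1̄,…,n̄}` and the finset `S ⊆ Fin m` records `A ∩ B`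
(so `B = S ∪ Ā`).  The biconing `G^{A,B}` adds the two vertices `0` and `0̄`
and the edges `00̄`, `0a (a ∈ A)` and `0̄b (b ∈ B)`.
-/

namespace BiconedPaper

noncomputable section
open scoped Classical

/-! ### Walks in multigraphs presented by an endpoint map -/

/-- A walk in the multigraph with edge set `ε` and endpoint map `ends`. -/
inductive MWalk {ε ν : Type} (ends : ε → Sym2 ν) : ν → ν → Type
  | nil (u : ν) : MWalk ends u u
  | cons {u w : ν} (e : ε) (v : ν) (h : ends e = s(u, v)) (p : MWalk ends v w) :
      MWalk ends u w

namespace MWalk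

variable {ε ν : Type} {ends : ε → Sym2 ν}

/-- The list of edges traversed by a walk. -/
def edges : ∀ {u v : ν}, MWalk ends u v → List ε
  | _, _, nil _ => []
  | _, _, cons e _ _ p => e :: p.edges

/-- The list of vertices visited by a walk. -/
def support : ∀ {u v : ν}, MWalk ends u v → List ν
  | u, _, nil _ => [u]
  | u, _, cons _ _ _ p => u :: p.support

/-- A walk is a path if it visits no vertex twice. -/
def IsPath {u v : ν} (p : MWalk ends u v) : Prop := p.support.Nodup

/-- All edges of the walk belong to the edge set `F`. -/
def edgesIn {u v : ν} (p : MWalk ends u v) (F : Finset ε) : Prop :=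
  ∀ e ∈ p.edges, e ∈ F

/-- The number of "bridging" edges traversed by a walk, i.e. steps whose two
endpoints lie on different sides according to `sideF`. -/
def bridgeCount (sideF : ν → Bool) : ∀ {u v : ν}, MWalk ends u v → ℕ
  | _, _, nil _ => 0
  | u, _, cons _ v' _ p => (if sideF u = sideF v' then 0 else 1) + p.bridgeCount sideF

end MWalk

/-- `u` and `v` are joined by a walk all of whose edges lie in `F`. -/
def Reachable {ε ν : Type} (ends : ε → Sym2 ν) (F : Finset ε) (u v : ν) : Prop :=
  ∃ p : MWalk ends u v, p.edgesIn F

/-- An edge set is acyclic (a forest) iff removing any one of its edges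
disconnects the endpoints of that edge.  (In particular no loops and no
parallel pairs.) -/
def IsAcyclic {ε ν : Type} [DecidableEq ε] (ends : ε → Sym2 ν) (F : Finset ε) : Prop :=
  ∀ e ∈ F, ∀ u v : ν, ends e = s(u, v) → ¬ Reachable ends (F.erase e) u v

/-- A spanning tree: an acyclic edge set connecting every pair of vertices. -/
def IsSpanningTree {ε ν : Type} [DecidableEq ε] (ends : ε → Sym2 ν) (T : Finset ε) : Prop :=
  IsAcyclic ends T ∧ ∀ u v : ν, Reachable ends T u v

/-! ### Biconed graphs -/

/-- The data of a biconed graph `G^{A,B}`:  the graph `G` has vertex set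
`A ∪ B` with `A = Fin m`, `Ā = B \ A = Fin n`, `A ∩ B = S`, and abstract
edge set `E` (so loops and parallel edges are allowed). -/
structure BiconedGraph where
  m : ℕ
  n : ℕ
  E : Type
  fintypeE : Fintype E
  decEqE : DecidableEq E
  ends : E → Sym2 (Fin m ⊕ₗ Fin n)
  S : Finset (Fin m)

namespace BiconedGraph

variable (P : BiconedGraph)

instance : Fintype P.E := P.fintypeE
instance : DecidableEq P.E := P.decEqE

/-- The vertices of `G`, linearly ordered `1 < ⋯ < m < 1̄ < ⋯ < n̄`. -/
abbrev VG := Fin P.m ⊕ₗ Fin P.n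

/-- The vertices of `G^{A,B}_red`:  `⊥` is the vertex `0̄`, ordered
`0̄ < 1 < ⋯ < m < 1̄ < ⋯ < n̄`. -/
abbrev Vred := WithBot P.VG

/-- The vertices of `G^{A,B}`: `⊥` is `0`, ordered `0 < 0̄ < 1 < ⋯ < n̄`. -/
abbrev W := WithBot P.Vred

/-- The vertex `a ∈ A`. -/
def aVert (a : Fin P.m) : P.VG := toLex (Sum.inl a)
/-- The vertex `b ∈ Ā`. -/
def bVert (b : Fin P.n) : P.VG := toLex (Sum.inr b)
/-- Inclusion of the vertices of `G` into those of `G^{A,B}_red`. -/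
def liftV (x : P.VG) : P.Vred := (x : WithBot P.VG)
/-- Inclusion of the vertices of `G^{A,B}_red` into those of `G^{A,B}`. -/
def liftW (x : P.Vred) : P.W := (x : WithBot P.Vred)

/-- The edges of the biconed graph `G^{A,B}`:  the edge `00̄`, the coning
edges `0a (a ∈ A)`, `0̄b (b ∈ Ā)`, `0̄a (a ∈ A ∩ B)`, and the edges of `G`. -/
abbrev EB := Unit ⊕ (Fin P.m ⊕ (Fin P.n ⊕ ({a : Fin P.m // a ∈ P.S} ⊕ P.E)))

/-- The edge `00̄`. -/
abbrev e00 : P.EB := Sum.inl ()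
/-- The coning edge `0a`, `a ∈ A`. -/
abbrev eA (a : Fin P.m) : P.EB := Sum.inr (Sum.inl a)
/-- The coning edge `0̄b`, `b ∈ Ā`. -/
abbrev eB (b : Fin P.n) : P.EB := Sum.inr (Sum.inr (Sum.inl b))
/-- The coning edge `0̄a`, `a ∈ A ∩ B`. -/
abbrev eS (a : {a : Fin P.m // a ∈ P.S}) : P.EB := Sum.inr (Sum.inr (Sum.inr (Sum.inl a)))
/-- An original edge of `G`. -/
abbrev eG (e : P.E) : P.EB := Sum.inr (Sum.inr (Sum.inr (Sum.inr e)))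

/-- The endpoint map of `G^{A,B}`. -/
def endsB : P.EB → Sym2 P.W
  | Sum.inl _ => s((⊥ : P.W), P.liftW ⊥)
  | Sum.inr (Sum.inl a) => s((⊥ : P.W), P.liftW (P.liftV (P.aVert a)))
  | Sum.inr (Sum.inr (Sum.inl b)) => s(P.liftW ⊥, P.liftW (P.liftV (P.bVert b)))
  | Sum.inr (Sum.inr (Sum.inr (Sum.inl a))) => s(P.liftW ⊥, P.liftW (P.liftV (P.aVert a.1)))
  | Sum.inr (Sum.inr (Sum.inr (Sum.inr e))) => (P.ends e).map fun x => P.liftW (P.liftV x)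

/-- The spanning tree `T₀`, consisting of `00̄`, the edges `0a (a ∈ A)` and
the edges `0̄b (b ∈ Ā)`. -/
def T0 : Finset P.EB :=
  Finset.univ.filter fun e => match e with
    | Sum.inl _ => True
    | Sum.inr (Sum.inl _) => True
    | Sum.inr (Sum.inr (Sum.inl _)) => True
    | _ => False

/-- The edges of `G^{A,B}_red` (delete the edges of `T₀` and the vertex `0`):
the edges `0̄a (a ∈ A ∩ B)` together with the edges of `G`. -/
abbrev Ered := {a : Fin P.m // a ∈ P.S} ⊕ P.E

/-- The endpoint map of `G^{A,B}_red`; `⊥` is the vertex `0̄`. -/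
def endsRed : P.Ered → Sym2 P.Vred
  | Sum.inl a => s((⊥ : P.Vred), P.liftV (P.aVert a.1))
  | Sum.inr e => (P.ends e).map P.liftV

/-- Inclusion of the edges of `G^{A,B}_red` into those of `G^{A,B}`. -/
def redToEB : P.Ered → P.EB
  | Sum.inl a => P.eS a
  | Sum.inr e => P.eG e

/-- The edge set `T \ T₀` of `T`, viewed inside `G^{A,B}_red`. -/
def redOf (T : Finset P.EB) : Finset P.Ered :=
  Finset.univ.filter fun e => P.redToEB e ∈ T

/-- `true` on the vertices of `A`, `false` on the vertices of `Ā ∪ {0̄}`. -/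
def side : P.Vred → Bool :=
  WithBot.recBotCoe false fun x => Sum.elim (fun _ => true) (fun _ => false) (ofLex x)

/-- The vertex lies in `A`. -/
def InA (v : P.Vred) : Prop := ∃ a : Fin P.m, v = P.liftV (P.aVert a)

/-- An edge of `G^{A,B}_red` is bridging if it joins a vertex of `A` to a
vertex of `Ā ∪ {0̄}`. -/
def BridgingE (e : P.Ered) : Prop :=
  ∃ u v : P.Vred, P.endsRed e = s(u, v) ∧ P.side u ≠ P.side v

/-! ### 2-edge-rooted forests -/

/-- The underlying edge set `F` of the multiset of edges given by the
multiplicity function `mult` (an edge `e` carries `mult e - 1` edge roots). -/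
def mSupport (mult : P.Ered → ℕ) : Finset P.Ered :=
  Finset.univ.filter fun e => mult e ≠ 0

/-- The degree of the multiset of edges given by `mult`. -/
def deg (mult : P.Ered → ℕ) : ℕ := ∑ e : P.Ered, mult e

/-- Edge `e` meets the connected component of `v` in the edge set `F`. -/
def Touches (F : Finset P.Ered) (v : P.Vred) (e : P.Ered) : Prop :=
  ∃ u : P.Vred, u ∈ P.endsRed e ∧ Reachable P.endsRed F v u

/-- The total number of edge roots in the component of `v`. -/
def compEdgeRoots (mult : P.Ered → ℕ) (v : P.Vred) : ℕ :=
  ∑ e ∈ P.mSupport mult, if P.Touches (P.mSupport mult) v e then mult e - 1 else 0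

/-- The component of `v` is `compCount`-edge-rooted:  the number of its edge
roots, plus `1` if it contains the vertex `0̄`. -/
def compCount (mult : P.Ered → ℕ) (v : P.Vred) : ℕ :=
  P.compEdgeRoots mult v +
    if Reachable P.endsRed (P.mSupport mult) v (⊥ : P.Vred) then 1 else 0

/-- Condition (C3) for the `2`-edge-rooted component of `v`:  the unique
shortest path containing both edge roots (resp. the vertex `0̄` and the edge
root, if the component contains `0̄`) has an odd number of bridging edges.
The shortest path containing two edges is the unique path whose first and
last edges are the two rooted edges; if the two edge roots lie on one common
edge (`mult e = 3`) the path is that single edge. -/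
def C3At (mult : P.Ered → ℕ) (v : P.Vred) : Prop :=
  (Reachable P.endsRed (P.mSupport mult) v (⊥ : P.Vred) →
    ∃ (x : P.Vred) (p : MWalk P.endsRed (⊥ : P.Vred) x),
      p.IsPath ∧ p.edgesIn (P.mSupport mult) ∧
      (∃ e, p.edges.getLast? = some e ∧ 2 ≤ mult e) ∧
      Odd (p.bridgeCount P.side)) ∧
  (¬ Reachable P.endsRed (P.mSupport mult) v (⊥ : P.Vred) →
    ∃ (x y : P.Vred) (p : MWalk P.endsRed x y),
      p.IsPath ∧ p.edgesIn (P.mSupport mult) ∧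
      Reachable P.endsRed (P.mSupport mult) v x ∧
      (∃ e, p.edges.head? = some e ∧ 2 ≤ mult e) ∧
      (∃ e, p.edges.getLast? = some e ∧ 2 ≤ mult e) ∧
      (∀ e, p.edges = [e] → mult e = 3) ∧
      Odd (p.bridgeCount P.side))

/-- `mult : Ered → ℕ` is (the multiplicity function of) a 2-edge-rooted
forest of `G^{A,B}_red`:
(C0) its support is a spanning forest;
(C1) at most one component is `2`-edge-rooted;
(C2) every other component is `0`- or `1`-edge-rooted;
(C3) the parity condition on the path joining the two roots. -/
def Is2ERF (mult : P.Ered → ℕ) : Prop :=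
  IsAcyclic P.endsRed (P.mSupport mult) ∧
  (∀ v : P.Vred, P.compCount mult v ≤ 2) ∧
  (∀ u v : P.Vred, P.compCount mult u = 2 → P.compCount mult v = 2 →
    Reachable P.endsRed (P.mSupport mult) u v) ∧
  (∀ v : P.Vred, P.compCount mult v = 2 → P.C3At mult v)

/-! ### Birooted forests -/

/-- `(F, R)` is a birooted forest of `G^{A,B}_red`:  `F` is a spanning forest,
the root set `R` contains `0̄`, every component of `F` contains at least one
root, no component contains three roots, at most one component contains two
roots, and a component with two roots has one root in `A` and the other in
`Ā ∪ {0̄}`. -/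
def IsBirootedForest (F : Finset P.Ered) (R : Set P.Vred) : Prop :=
  IsAcyclic P.endsRed F ∧
  (⊥ : P.Vred) ∈ R ∧
  (∀ v : P.Vred, ∃ r ∈ R, Reachable P.endsRed F v r) ∧
  (∀ r₁ ∈ R, ∀ r₂ ∈ R, ∀ r₃ ∈ R, r₁ ≠ r₂ → r₁ ≠ r₃ → r₂ ≠ r₃ →
    Reachable P.endsRed F r₁ r₂ → Reachable P.endsRed F r₁ r₃ → False) ∧
  (∀ r₁ ∈ R, ∀ r₂ ∈ R, ∀ r₃ ∈ R, ∀ r₄ ∈ R, r₁ ≠ r₂ → r₃ ≠ r₄ →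
    Reachable P.endsRed F r₁ r₂ → Reachable P.endsRed F r₃ r₄ →
    Reachable P.endsRed F r₁ r₃) ∧
  (∀ r₁ ∈ R, ∀ r₂ ∈ R, r₁ ≠ r₂ → Reachable P.endsRed F r₁ r₂ →
    (P.InA r₁ ∧ ¬ P.InA r₂) ∨ (P.InA r₂ ∧ ¬ P.InA r₁))

/-! ### Internal activity and the edge order -/

/-- `e` is internally passive in the spanning tree `T`:  it can be exchanged
for a strictly smaller edge `f` so that the result is again a spanning tree. -/
def InternallyPassive (ord : LinearOrder P.EB) (T : Finset P.EB) (e : P.EB) : Prop :=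
  e ∈ T ∧ ∃ f : P.EB, ord.lt f e ∧ IsSpanningTree P.endsB (insert f (T.erase e))

/-- `e` is internally active in the spanning tree `T`. -/
def InternallyActive (ord : LinearOrder P.EB) (T : Finset P.EB) (e : P.EB) : Prop :=
  e ∈ T ∧ ¬ ∃ f : P.EB, ord.lt f e ∧ IsSpanningTree P.endsB (insert f (T.erase e))

/-- The number of internally passive edges of `T`. -/
def ipCount (ord : LinearOrder P.EB) (T : Finset P.EB) : ℕ :=
  (T.filter fun e => P.InternallyPassive ord T e).card

/-- The smaller endpoint of an edge of `G^{A,B}`. -/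
def endMin (e : P.EB) : P.W := Sym2.lift ⟨fun a b => a ⊓ b, fun a b => inf_comm a b⟩ (P.endsB e)
/-- The larger endpoint of an edge of `G^{A,B}`. -/
def endMax (e : P.EB) : P.W := Sym2.lift ⟨fun a b => a ⊔ b, fun a b => sup_comm a b⟩ (P.endsB e)

/-- The endpoints of an edge, as an ordered pair in the lexicographic square
of the vertex order `0 < 0̄ < 1 < ⋯ < m < 1̄ < ⋯ < n̄`. -/
def lexEnds (e : P.EB) : P.W ×ₗ P.W := toLex (P.endMin e, P.endMax e)

/-- A linear order on the edges of `G^{A,B}` is admissible if it refines the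
lexicographic order on endpoints (so parallel edges are ordered arbitrarily). -/
def AdmissibleOrder (ord : LinearOrder P.EB) : Prop :=
  ∀ e f : P.EB, P.lexEnds e < P.lexEnds f → ord.lt e f

/-- `v` is a connecting vertex of `T`:  `v ∈ A` and `v` is adjacent to `0` in
`T`, or `v ∈ Ā` and `v` is adjacent to `0̄` in `T`. -/
def ConnVertex (T : Finset P.EB) (v : P.Vred) : Prop :=
  (∃ a : Fin P.m, v = P.liftV (P.aVert a) ∧ P.eA a ∈ T) ∨
  (∃ b : Fin P.n, v = P.liftV (P.bVert b) ∧ P.eB b ∈ T)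

/-- `e` is a connecting edge of `T` (an edge `0a`, `a ∈ A`, or `0̄b`, `b ∈ Ā`)
with connecting vertex `v`. -/
def ConnEdge (T : Finset P.EB) (e : P.EB) (v : P.Vred) : Prop :=
  e ∈ T ∧ ((∃ a : Fin P.m, e = P.eA a ∧ v = P.liftV (P.aVert a)) ∨
           (∃ b : Fin P.n, e = P.eB b ∧ v = P.liftV (P.bVert b)))

/-! ### The h-vector -/

/-- `f_{i-1}`:  the number of acyclic edge sets of cardinality `i` in `G^{A,B}`. -/
def numAcyclic (i : ℕ) : ℕ :=
  Nat.card {F : Finset P.EB // IsAcyclic P.endsB F ∧ F.card = i}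

/-- The rank of the graphic matroid of `G^{A,B}`:  `|V| - 1 = m + n + 1`. -/
def d : ℕ := P.m + P.n + 1

/-- `h` is the h-vector of the graphic matroid of `G^{A,B}`:  it satisfies
`Σ_{i=0}^{d} f_{i-1} (t-1)^{d-i} = Σ_{k=0}^{d} h_k t^{d-k}`. -/
def IsHVector (h : ℕ → ℤ) : Prop :=
  ∑ i ∈ Finset.range (P.d + 1),
      Polynomial.C ((P.numAcyclic i : ℤ)) * (Polynomial.X - 1) ^ (P.d - i)
    = ∑ k ∈ Finset.range (P.d + 1), Polynomial.C (h k) * Polynomial.X ^ (P.d - k)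

end BiconedGraph

/-- `(h 0, …, h d)` is a pure O-sequence:  there is a multicomplex `M` of
multisets on a finite ground set (nonempty, closed under sub-multisets), all
of whose inclusion-maximal members have the same cardinality, whose members
all have cardinality at most `d`, and which has exactly `h i` members of
cardinality `i` for every `i ≤ d`. -/
def IsPureOSeq (d : ℕ) (h : ℕ → ℤ) : Prop :=
  ∃ (N : ℕ) (M : Set (Multiset (Fin N))),
    M.Nonempty ∧
    (∀ s ∈ M, ∀ t : Multiset (Fin N), t ≤ s → t ∈ M) ∧
    (∀ s ∈ M, ∀ t ∈ M, (∀ u ∈ M, s ≤ u → u = s) → (∀ u ∈ M, t ≤ u → u = t) →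
      Multiset.card s = Multiset.card t) ∧
    (∀ s ∈ M, Multiset.card s ≤ d) ∧
    (∀ i ≤ d, (Nat.card {s : Multiset (Fin N) // s ∈ M ∧ Multiset.card s = i} : ℤ) = h i)



/-! ### Auxiliary infrastructure for Statement 5 -/

namespace MWalk

variable {ε ν : Type} {ends : ε → Sym2 ν}

/-- Concatenation of walks. -/
def append : ∀ {u v w : ν}, MWalk ends u v → MWalk ends v w → MWalk ends u w
  | _, _, _, nil _, q => q
  | _, _, _, cons e v h p, q => cons e v h (p.append q)

lemma edges_append : ∀ {u v w : ν} (p : MWalk ends u v) (q : MWalk ends v w),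
    (p.append q).edges = p.edges ++ q.edges
  | _, _, _, nil _, _ => rfl
  | _, _, _, cons e v h p, q => by
      simp [append, edges, edges_append p q]

/-- Reversal of a walk. -/
def reverse : ∀ {u v : ν}, MWalk ends u v → MWalk ends v u
  | _, _, nil u => nil u
  | _, _, cons e _ h p => p.reverse.append (cons e _ (h.trans Sym2.eq_swap) (nil _))

lemma edges_reverse : ∀ {u v : ν} (p : MWalk ends u v), p.reverse.edges = p.edges.reverse
  | _, _, nil _ => rfl
  | _, _, cons e v h p => by
      simp [reverse, edges_append, edges, edges_reverse p]

lemma start_mem_support : ∀ {u v : ν} (p : MWalk ends u v), u ∈ p.support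
  | _, _, nil _ => by simp [support]
  | _, _, cons e v h p => by simp [support]

lemma mem_support_of_mem_edges :
    ∀ {u v : ν} (p : MWalk ends u v) {f : ε}, f ∈ p.edges →
      ∀ {w : ν}, w ∈ ends f → w ∈ p.support
  | _, _, nil _, f, hf, _, _ => by simp [edges] at hf
  | u, _, cons e v h p, f, hf, w, hw => by
      simp only [edges, List.mem_cons] at hf
      simp only [support, List.mem_cons]
      rcases hf with rfl | hf
      · rw [h, Sym2.mem_iff] at hw
        rcases hw with rfl | rfl
        · exact Or.inl rfl
        · exact Or.inr (start_mem_support p)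
      · exact Or.inr (mem_support_of_mem_edges p hf hw)

lemma edges_nodup : ∀ {u v : ν} (p : MWalk ends u v), p.IsPath → p.edges.Nodup
  | _, _, nil _, _ => by simp [edges]
  | u, _, cons e v h p, hp => by
      have hsup : u ∉ p.support ∧ p.support.Nodup := by
        simpa [IsPath, support] using hp
      simp only [edges, List.nodup_cons]
      refine ⟨fun he => ?_, edges_nodup p hsup.2⟩
      exact hsup.1 (mem_support_of_mem_edges p he (by rw [h]; exact Sym2.mem_mk_left u v))

lemma head_edge : ∀ {u v : ν} (p : MWalk ends u v) {f : ε},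
    p.edges.head? = some f → ∃ w, ends f = s(u, w)
  | _, _, nil _, f, hf => by simp [edges] at hf
  | _, _, cons e v h p, f, hf => by
      simp only [edges, List.head?_cons, Option.some.injEq] at hf
      exact ⟨v, by rw [← hf]; exact h⟩

lemma getLast_edge : ∀ {u v : ν} (p : MWalk ends u v) {f : ε},
    p.edges.getLast? = some f → ∃ w, ends f = s(w, v) := by
  intro u v p
  induction p with
  | nil u => intro f hf; simp [edges] at hf
  | cons e w h q ih =>
    intro f hf
    cases q with
    | nil x =>
      simp only [edges, List.getLast?_singleton, Option.some.injEq] at hf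
      exact ⟨_, by rw [← hf]; exact h⟩
    | cons e' w' h' q' =>
      have h1 : (cons e w h (cons e' w' h' q')).edges
          = e :: e' :: q'.edges := rfl
      rw [h1, List.getLast?_cons_cons] at hf
      exact ih hf

lemma split_at_edge : ∀ {u v : ν} (p : MWalk ends u v) {f : ε}, f ∈ p.edges →
    ∃ (a b : ν) (q : MWalk ends u a) (r : MWalk ends b v),
      ends f = s(a, b) ∧ p.edges = q.edges ++ f :: r.edges
  | _, _, nil _, f, hf => by simp [edges] at hf
  | u, v, cons e w h p, f, hf => by
      rcases List.mem_cons.mp hf with rfl | hf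
      · exact ⟨u, w, nil u, p, h, by simp [edges]⟩
      · obtain ⟨a, b, q, r, hab, hsp⟩ := split_at_edge p hf
        exact ⟨a, b, cons e w h q, r, hab, by simp [edges, hsp]⟩

end MWalk

section ReachLemmas

variable {ε ν : Type} {ends : ε → Sym2 ν} {F F' : Finset ε}

lemma reach_refl (u : ν) : Reachable ends F u u :=
  ⟨MWalk.nil u, by intro g hg; simp [MWalk.edges] at hg⟩

lemma Reachable.trans {u v w : ν} (h1 : Reachable ends F u v)
    (h2 : Reachable ends F v w) : Reachable ends F u w := by
  obtain ⟨p, hp⟩ := h1; obtain ⟨q, hq⟩ := h2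
  refine ⟨p.append q, fun g hg => ?_⟩
  rw [MWalk.edges_append] at hg
  rcases List.mem_append.mp hg with hg | hg
  exacts [hp g hg, hq g hg]

lemma Reachable.symm {u v : ν} (h : Reachable ends F u v) : Reachable ends F v u := by
  obtain ⟨p, hp⟩ := h
  refine ⟨p.reverse, fun g hg => ?_⟩
  rw [MWalk.edges_reverse, List.mem_reverse] at hg
  exact hp g hg

lemma Reachable.mono (hs : F ⊆ F') {u v : ν} (h : Reachable ends F u v) :
    Reachable ends F' u v := by
  obtain ⟨p, hp⟩ := h; exact ⟨p, fun g hg => hs (hp g hg)⟩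

lemma reach_step {f : ε} {a b : ν} (hf : f ∈ F) (h : ends f = s(a, b)) :
    Reachable ends F a b :=
  ⟨MWalk.cons f b h (MWalk.nil b), by
    intro g hg; simp [MWalk.edges] at hg; subst hg; exact hf⟩

lemma reach_of_mem_mem {f : ε} {a b : ν} (hf : f ∈ F) (ha : a ∈ ends f)
    (hb : b ∈ ends f) : Reachable ends F a b := by
  obtain ⟨x, y, hxy⟩ : ∃ x y, ends f = s(x, y) :=
    Sym2.inductionOn (f := fun z => ∃ x y, z = s(x, y)) (ends f)
      (fun x y => ⟨x, y, rfl⟩)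
  rw [hxy, Sym2.mem_iff] at ha hb
  have hstep := reach_step hf hxy
  rcases ha with rfl | rfl <;> rcases hb with rfl | rfl <;>
    first
      | exact reach_refl _
      | exact hstep
      | exact hstep.symm

lemma walk_edge_reach : ∀ {u v : ν} (p : MWalk ends u v), p.edgesIn F →
    ∀ {f : ε}, f ∈ p.edges → ∃ a, a ∈ ends f ∧ Reachable ends F u a
  | _, _, MWalk.nil _, _, f, hf => by simp [MWalk.edges] at hf
  | u, v, MWalk.cons e w h q, hp, f, hf => by
      have he : e ∈ F := hp e (by simp [MWalk.edges])
      rcases List.mem_cons.mp hf with rfl | hf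
      · exact ⟨u, by rw [h]; exact Sym2.mem_mk_left _ _, reach_refl u⟩
      · obtain ⟨a, ha, hr⟩ :=
          walk_edge_reach q (fun g hg => hp g (by simp [MWalk.edges]; exact Or.inr hg)) hf
        exact ⟨a, ha, (reach_step he h).trans hr⟩

end ReachLemmas

namespace BiconedGraph

variable {P : BiconedGraph}

lemma mem_mSupport {mult : P.Ered → ℕ} {f : P.Ered} :
    f ∈ P.mSupport mult ↔ mult f ≠ 0 := by simp [mSupport]

lemma touches_of_reach {F : Finset P.Ered} {u v : P.Vred} {f : P.Ered}
    (h : Reachable P.endsRed F v u) (ht : P.Touches F u f) : P.Touches F v f := by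
  obtain ⟨w, hw, hr⟩ := ht; exact ⟨w, hw, h.trans hr⟩

lemma touches_mono {F F' : Finset P.Ered} (hs : F ⊆ F') {v : P.Vred} {f : P.Ered}
    (ht : P.Touches F v f) : P.Touches F' v f := by
  obtain ⟨w, hw, hr⟩ := ht; exact ⟨w, hw, hr.mono hs⟩

lemma reach_of_touches {F : Finset P.Ered} {v : P.Vred} {f : P.Ered} (hf : f ∈ F)
    (ht : P.Touches F v f) {w : P.Vred} (hw : w ∈ P.endsRed f) :
    Reachable P.endsRed F v w := by
  obtain ⟨z, hz, hr⟩ := ht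
  exact hr.trans (reach_of_mem_mem hf hz hw)

lemma compCount_mono {mult mult' : P.Ered → ℕ} (v : P.Vred)
    (hsub : P.mSupport mult' ⊆ P.mSupport mult)
    (hle : ∀ f ∈ P.mSupport mult', mult' f ≤ mult f) :
    P.compCount mult' v ≤ P.compCount mult v := by
  unfold compCount compEdgeRoots
  have h1 : ∀ f ∈ P.mSupport mult',
      (if P.Touches (P.mSupport mult') v f then mult' f - 1 else 0)
      ≤ (if P.Touches (P.mSupport mult) v f then mult f - 1 else 0) := by
    intro f hf
    by_cases ht : P.Touches (P.mSupport mult') v f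
    · rw [if_pos ht, if_pos (touches_mono hsub ht)]
      exact Nat.sub_le_sub_right (hle f hf) 1
    · rw [if_neg ht]; exact Nat.zero_le _
  have h2 := (Finset.sum_le_sum h1).trans (Finset.sum_le_sum_of_subset hsub)
  have h3 : (if Reachable P.endsRed (P.mSupport mult') v ⊥ then 1 else 0)
      ≤ (if Reachable P.endsRed (P.mSupport mult) v ⊥ then (1:ℕ) else 0) := by
    by_cases hr : Reachable P.endsRed (P.mSupport mult') v ⊥
    · rw [if_pos hr, if_pos (hr.mono hsub)]
    · rw [if_neg hr]; exact Nat.zero_le _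
  omega

lemma forcing {mult mult' : P.Ered → ℕ} (v : P.Vred)
    (hsub : P.mSupport mult' ⊆ P.mSupport mult)
    (hle : ∀ f ∈ P.mSupport mult', mult' f ≤ mult f)
    (hdrop : ∀ f ∈ P.mSupport mult, f ∉ P.mSupport mult' → mult f = 1)
    (hcnt : P.compCount mult' v = P.compCount mult v) :
    (∀ f, P.Touches (P.mSupport mult) v f → 2 ≤ mult f →
      f ∈ P.mSupport mult' ∧ P.Touches (P.mSupport mult') v f ∧ mult' f = mult f) ∧
    (Reachable P.endsRed (P.mSupport mult) v ⊥ →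
      Reachable P.endsRed (P.mSupport mult') v ⊥) := by
  classical
  have hterm : ∀ f ∈ P.mSupport mult',
      (if P.Touches (P.mSupport mult') v f then mult' f - 1 else 0)
      ≤ (if P.Touches (P.mSupport mult) v f then mult f - 1 else 0) := by
    intro f hf
    by_cases ht : P.Touches (P.mSupport mult') v f
    · rw [if_pos ht, if_pos (touches_mono hsub ht)]
      exact Nat.sub_le_sub_right (hle f hf) 1
    · rw [if_neg ht]; exact Nat.zero_le _
  have hA : P.compEdgeRoots mult' v = ∑ f ∈ P.mSupport mult',
      (if P.Touches (P.mSupport mult') v f then mult' f - 1 else 0) := rfl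
  have hB : P.compEdgeRoots mult v = ∑ f ∈ P.mSupport mult',
      (if P.Touches (P.mSupport mult) v f then mult f - 1 else 0) := by
    refine (Finset.sum_subset hsub ?_).symm
    intro f hf hnf
    have h1 := hdrop f hf hnf
    rw [h1]; simp
  have hindle : (if Reachable P.endsRed (P.mSupport mult') v ⊥ then 1 else 0)
      ≤ (if Reachable P.endsRed (P.mSupport mult) v ⊥ then (1:ℕ) else 0) := by
    by_cases hr : Reachable P.endsRed (P.mSupport mult') v ⊥
    · rw [if_pos hr, if_pos (hr.mono hsub)]
    · rw [if_neg hr]; exact Nat.zero_le _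
  have hsum_le : (∑ f ∈ P.mSupport mult',
      (if P.Touches (P.mSupport mult') v f then mult' f - 1 else 0))
      ≤ ∑ f ∈ P.mSupport mult',
      (if P.Touches (P.mSupport mult) v f then mult f - 1 else 0) :=
    Finset.sum_le_sum hterm
  have hcnt2 : P.compEdgeRoots mult' v +
      (if Reachable P.endsRed (P.mSupport mult') v ⊥ then 1 else 0)
      = P.compEdgeRoots mult v +
      (if Reachable P.endsRed (P.mSupport mult) v ⊥ then 1 else 0) := hcnt
  rw [hA, hB] at hcnt2
  have hsum_eq : (∑ f ∈ P.mSupport mult',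
      (if P.Touches (P.mSupport mult') v f then mult' f - 1 else 0))
      = ∑ f ∈ P.mSupport mult',
      (if P.Touches (P.mSupport mult) v f then mult f - 1 else 0) := by omega
  have hind_eq : (if Reachable P.endsRed (P.mSupport mult') v ⊥ then 1 else 0)
      = (if Reachable P.endsRed (P.mSupport mult) v ⊥ then (1:ℕ) else 0) := by omega
  have hforce := (Finset.sum_eq_sum_iff_of_le hterm).mp hsum_eq
  constructor
  · intro f htf h2
    have hfS : f ∈ P.mSupport mult := mem_mSupport.mpr (by omega)
    have hfS' : f ∈ P.mSupport mult' := by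
      by_contra hn
      have := hdrop f hfS hn; omega
    have h1 := hforce f hfS'
    rw [if_pos htf] at h1
    have htf' : P.Touches (P.mSupport mult') v f := by
      by_contra hn
      rw [if_neg hn] at h1; omega
    rw [if_pos htf'] at h1
    have hne : mult' f ≠ 0 := mem_mSupport.mp hfS'
    exact ⟨hfS', htf', by omega⟩
  · intro hR
    rw [if_pos hR] at hind_eq
    by_contra hn
    rw [if_neg hn] at hind_eq
    omega

lemma exists_witness {mult : P.Ered → ℕ} {v : P.Vred} (hv : P.compCount mult v = 2) :
    Reachable P.endsRed (P.mSupport mult) v ⊥ ∨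
      ∃ f, P.Touches (P.mSupport mult) v f ∧ 2 ≤ mult f := by
  by_cases hr : Reachable P.endsRed (P.mSupport mult) v ⊥
  · exact Or.inl hr
  right
  unfold compCount at hv
  rw [if_neg hr] at hv
  have hne : P.compEdgeRoots mult v ≠ 0 := by omega
  unfold compEdgeRoots at hne
  obtain ⟨f, hf, hfne⟩ := Finset.exists_ne_zero_of_sum_ne_zero hne
  by_cases ht : P.Touches (P.mSupport mult) v f
  · rw [if_pos ht] at hfne; exact ⟨f, ht, by omega⟩
  · rw [if_neg ht] at hfne; exact absurd rfl hfne

end BiconedGraph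

open BiconedGraph

/-- Lemma 4.3.  The collection of 2-edge-rooted forests of
`G^{A,B}_red` is a multicomplex on the edge set of `G^{A,B}_red`:  removing
one copy of one edge from a 2-edge-rooted forest again yields a
2-edge-rooted forest. -/
theorem twoEdgeRootedForests_multicomplex (P : BiconedGraph)
    (mult : P.Ered → ℕ) (hm : P.Is2ERF mult) (e : P.Ered) (he : 0 < mult e) :
    P.Is2ERF (fun f => if f = e then mult e - 1 else mult f) := by
  classical
  obtain ⟨hac, hc2, huniq, hC3⟩ := hm
  set mult' : P.Ered → ℕ := fun f => if f = e then mult e - 1 else mult f with hmult'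
  have hdiff : ∀ f, f ≠ e → mult' f = mult f := fun f hf => by simp [hmult', hf]
  have hme : mult' e = mult e - 1 := by simp [hmult']
  have hsub : P.mSupport mult' ⊆ P.mSupport mult := by
    intro f hf
    rw [mem_mSupport] at hf
    rw [mem_mSupport]
    by_cases hfe : f = e
    · subst hfe; rw [hme] at hf; omega
    · rwa [hdiff f hfe] at hf
  have hle : ∀ f ∈ P.mSupport mult', mult' f ≤ mult f := by
    intro f _
    by_cases hfe : f = e
    · subst hfe; rw [hme]; omega
    · rw [hdiff f hfe]
  have hdrop : ∀ f ∈ P.mSupport mult, f ∉ P.mSupport mult' → mult f = 1 := by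
    intro f hf hnf
    rw [mem_mSupport] at hf
    rw [mem_mSupport, not_not] at hnf
    by_cases hfe : f = e
    · subst hfe; rw [hme] at hnf; omega
    · rw [hdiff f hfe] at hnf; omega
  have hmono : ∀ v, P.compCount mult' v ≤ P.compCount mult v :=
    fun v => compCount_mono v hsub hle
  refine ⟨?_, ?_, ?_, ?_⟩
  · -- acyclic
    intro f hf u w hw hr
    exact hac f (hsub hf) u w hw (hr.mono (Finset.erase_subset_erase f hsub))
  · -- at most 2
    intro v
    exact le_trans (hmono v) (hc2 v)
  · -- uniqueness of the 2-rooted component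
    intro u v hu hv
    have hcu : P.compCount mult u = 2 := by
      have h1 := hmono u; have h2 := hc2 u; omega
    have hcv : P.compCount mult v = 2 := by
      have h1 := hmono v; have h2 := hc2 v; omega
    have hfu := forcing u hsub hle hdrop (by rw [hu, hcu])
    have hfv := forcing v hsub hle hdrop (by rw [hv, hcv])
    have huv : Reachable P.endsRed (P.mSupport mult) u v := huniq u v hcu hcv
    rcases exists_witness hcu with hr | ⟨f, htf, hf2⟩
    · have hrv : Reachable P.endsRed (P.mSupport mult) v ⊥ := huv.symm.trans hr
      exact (hfu.2 hr).trans (hfv.2 hrv).symm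
    · have htfv : P.Touches (P.mSupport mult) v f := touches_of_reach huv.symm htf
      obtain ⟨hfS', htu', hmf⟩ := hfu.1 f htf hf2
      obtain ⟨-, htv', -⟩ := hfv.1 f htfv hf2
      obtain ⟨w1, hw1, hr1⟩ := htu'
      obtain ⟨w2, hw2, hr2⟩ := htv'
      exact hr1.trans ((reach_of_mem_mem hfS' hw1 hw2).trans hr2.symm)
  · -- condition (C3)
    intro v hv'
    have hcv : P.compCount mult v = 2 := by
      have h1 := hmono v; have h2 := hc2 v; omega
    obtain ⟨force1, force2⟩ := forcing v hsub hle hdrop (by rw [hv', hcv])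
    obtain ⟨hb, hnb⟩ := hC3 v hcv
    have heS : e ∈ P.mSupport mult := mem_mSupport.mpr (by omega)
    refine ⟨?_, ?_⟩
    · -- component of `v` contains `0̄`
      intro hR'
      have hR : Reachable P.endsRed (P.mSupport mult) v ⊥ := hR'.mono hsub
      obtain ⟨x, p, hpath, hinS, ⟨f, hflast, hf2⟩, hodd⟩ := hb hR
      have hfmem : f ∈ p.edges := List.mem_of_mem_getLast? hflast
      have htf : P.Touches (P.mSupport mult) v f := by
        obtain ⟨a, ha, hra⟩ := walk_edge_reach p hinS hfmem
        exact touches_of_reach hR ⟨a, ha, hra⟩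
      obtain ⟨hfS', htf', hmf⟩ := force1 f htf hf2
      have hep : e ∉ p.edges := by
        intro hep
        by_cases h2 : 2 ≤ mult e
        · have hte : P.Touches (P.mSupport mult) v e := by
            obtain ⟨a, ha, hra⟩ := walk_edge_reach p hinS hep
            exact touches_of_reach hR ⟨a, ha, hra⟩
          have hcontra := (force1 e hte h2).2.2
          rw [hme] at hcontra; omega
        · have hme1 : mult e = 1 := by omega
          have heS' : e ∉ P.mSupport mult' := by
            rw [mem_mSupport, not_not, hme, hme1]
          have hS'e : P.mSupport mult' ⊆ (P.mSupport mult).erase e := fun g hg =>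
            Finset.mem_erase.mpr ⟨fun h => heS' (h ▸ hg), hsub hg⟩
          obtain ⟨a, b, q, r, hab, hsp⟩ := MWalk.split_at_edge p hep
          have hnd := MWalk.edges_nodup p hpath
          rw [hsp, List.nodup_append] at hnd
          have heq : e ∉ q.edges := fun h => hnd.2.2 e h e List.mem_cons_self rfl
          have her : e ∉ r.edges := fun h => (List.nodup_cons.mp hnd.2.1).1 h
          have hq : q.edgesIn ((P.mSupport mult).erase e) := by
            intro g hg
            refine Finset.mem_erase.mpr ⟨fun h => heq (h ▸ hg), hinS g ?_⟩
            rw [hsp]; exact List.mem_append_left _ hg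
          have hr' : r.edgesIn ((P.mSupport mult).erase e) := by
            intro g hg
            refine Finset.mem_erase.mpr ⟨fun h => her (h ▸ hg), hinS g ?_⟩
            rw [hsp]; exact List.mem_append_right _ (List.mem_cons_of_mem _ hg)
          obtain ⟨w, hwf⟩ := MWalk.getLast_edge p hflast
          have hx : Reachable P.endsRed ((P.mSupport mult).erase e) v x :=
            (reach_of_touches hfS' htf'
              (by rw [hwf]; exact Sym2.mem_mk_right _ _)).mono hS'e
          have hbot : Reachable P.endsRed ((P.mSupport mult).erase e) v ⊥ :=
            (force2 hR).mono hS'e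
          have hqa : Reachable P.endsRed ((P.mSupport mult).erase e) ⊥ a := ⟨q, hq⟩
          have hrb : Reachable P.endsRed ((P.mSupport mult).erase e) b x := ⟨r, hr'⟩
          exact hac e heS a b hab
            (hqa.symm.trans (hbot.symm.trans (hx.trans hrb.symm)))
      have hinS' : p.edgesIn (P.mSupport mult') := by
        intro g hg
        have hge : g ≠ e := fun h => hep (h ▸ hg)
        rw [mem_mSupport, hdiff g hge]
        have hgs := hinS g hg
        rw [mem_mSupport] at hgs
        exact hgs
      exact ⟨x, p, hpath, hinS', ⟨f, hflast, by omega⟩, hodd⟩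
    · -- component of `v` does not contain `0̄`
      intro hnR'
      have hnR : ¬ Reachable P.endsRed (P.mSupport mult) v ⊥ := fun h => hnR' (force2 h)
      obtain ⟨x, y, p, hpath, hinS, hvx, ⟨f1, hh1, hf1⟩, ⟨f2, hl2, hf2⟩, hsing, hodd⟩ :=
        hnb hnR
      have hf1mem : f1 ∈ p.edges := List.mem_of_mem_head? hh1
      have hf2mem : f2 ∈ p.edges := List.mem_of_mem_getLast? hl2
      have htf1 : P.Touches (P.mSupport mult) v f1 := by
        obtain ⟨a, ha, hra⟩ := walk_edge_reach p hinS hf1mem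
        exact touches_of_reach hvx ⟨a, ha, hra⟩
      have htf2 : P.Touches (P.mSupport mult) v f2 := by
        obtain ⟨a, ha, hra⟩ := walk_edge_reach p hinS hf2mem
        exact touches_of_reach hvx ⟨a, ha, hra⟩
      obtain ⟨hf1S', htf1', hm1⟩ := force1 f1 htf1 hf1
      obtain ⟨hf2S', htf2', hm2⟩ := force1 f2 htf2 hf2
      obtain ⟨w1, hw1f⟩ := MWalk.head_edge p hh1
      obtain ⟨w2, hw2f⟩ := MWalk.getLast_edge p hl2
      have hvx' : Reachable P.endsRed (P.mSupport mult') v x :=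
        reach_of_touches hf1S' htf1' (by rw [hw1f]; exact Sym2.mem_mk_left _ _)
      have hvy' : Reachable P.endsRed (P.mSupport mult') v y :=
        reach_of_touches hf2S' htf2' (by rw [hw2f]; exact Sym2.mem_mk_right _ _)
      have hep : e ∉ p.edges := by
        intro hep
        by_cases h2 : 2 ≤ mult e
        · have hte : P.Touches (P.mSupport mult) v e := by
            obtain ⟨a, ha, hra⟩ := walk_edge_reach p hinS hep
            exact touches_of_reach hvx ⟨a, ha, hra⟩
          have hcontra := (force1 e hte h2).2.2
          rw [hme] at hcontra; omega
        · have hme1 : mult e = 1 := by omega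
          have heS' : e ∉ P.mSupport mult' := by
            rw [mem_mSupport, not_not, hme, hme1]
          have hS'e : P.mSupport mult' ⊆ (P.mSupport mult).erase e := fun g hg =>
            Finset.mem_erase.mpr ⟨fun h => heS' (h ▸ hg), hsub hg⟩
          obtain ⟨a, b, q, r, hab, hsp⟩ := MWalk.split_at_edge p hep
          have hnd := MWalk.edges_nodup p hpath
          rw [hsp, List.nodup_append] at hnd
          have heq : e ∉ q.edges := fun h => hnd.2.2 e h e List.mem_cons_self rfl
          have her : e ∉ r.edges := fun h => (List.nodup_cons.mp hnd.2.1).1 h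
          have hq : q.edgesIn ((P.mSupport mult).erase e) := by
            intro g hg
            refine Finset.mem_erase.mpr ⟨fun h => heq (h ▸ hg), hinS g ?_⟩
            rw [hsp]; exact List.mem_append_left _ hg
          have hr' : r.edgesIn ((P.mSupport mult).erase e) := by
            intro g hg
            refine Finset.mem_erase.mpr ⟨fun h => her (h ▸ hg), hinS g ?_⟩
            rw [hsp]; exact List.mem_append_right _ (List.mem_cons_of_mem _ hg)
          have hqa : Reachable P.endsRed ((P.mSupport mult).erase e) x a := ⟨q, hq⟩
          have hrb : Reachable P.endsRed ((P.mSupport mult).erase e) b y := ⟨r, hr'⟩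
          exact hac e heS a b hab
            (hqa.symm.trans ((hvx'.mono hS'e).symm.trans
              ((hvy'.mono hS'e).trans hrb.symm)))
      have hinS' : p.edgesIn (P.mSupport mult') := by
        intro g hg
        have hge : g ≠ e := fun h => hep (h ▸ hg)
        rw [mem_mSupport, hdiff g hge]
        have hgs := hinS g hg
        rw [mem_mSupport] at hgs
        exact hgs
      refine ⟨x, y, p, hpath, hinS', hvx', ⟨f1, hh1, by omega⟩, ⟨f2, hl2, by omega⟩,
        ?_, hodd⟩
      intro g hg
      have hgmem : g ∈ p.edges := by rw [hg]; exact List.mem_cons_self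
      have hge : g ≠ e := fun h => hep (h ▸ hgmem)
      rw [hdiff g hge]
      exact hsing g hg


end

end BiconedPaper
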